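/- For n ≥ 2, the reversal of the identity permutation, w = R(id) with one-line notation n (n−1) … 2 1, lies in a γ-orbit of size exactly 2, where γ = I ∘ F^{-1} ∘ C ∘ F. -/

import Mathlib

/-- The cycle of `w` containing `x`, listed starting at `x`:
`[x, w x, w² x, …]` with each element appearing once. -/
def cyc {n : ℕ} (w : Equiv.Perm (Fin n)) (x : Fin n) : List (Fin n) :=
  (List.range n).foldl (fun acc k => if (w ^ k) x ∈ acc then acc else acc ++ [(w ^ k) x]) []

/-- The Rényi–Foata word of `w`: write the canonical cycle decomposition
(each cycle starting with its largest element, cycles listed in increasing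
order of largest elements) and drop the parentheses. -/
def foataWord {n : ℕ} (w : Equiv.Perm (Fin n)) : List (Fin n) :=
  ((List.finRange n).filter (fun x => decide (∀ y ∈ cyc w x, y ≤ x))).flatMap (cyc w)

/-- The Rényi–Foata map, as a function `Fin n → Fin n` reading off the word. -/
def foataFun {n : ℕ} (w : Equiv.Perm (Fin n)) : Fin n → Fin n :=
  fun i => (foataWord w).getD i.val ⟨0, i.pos⟩

/-- One-line notation of a permutation, as a list of values in `Fin n`. -/
def oneLineF {n : ℕ} (w : Equiv.Perm (Fin n)) : List (Fin n) :=
  (List.finRange n).map w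

/-- One-line notation with natural-number entries (0-indexed values). -/
def oneLineN {n : ℕ} (w : Equiv.Perm (Fin n)) : List ℕ :=
  (List.finRange n).map fun i => (w i : ℕ)

/-- The Rényi–Foata word with natural-number entries. -/
def wordN {n : ℕ} (w : Equiv.Perm (Fin n)) : List ℕ :=
  (foataWord w).map Fin.val

/-- `i` is a record (left-to-right maximum) position of the word `L`. -/
def recB (L : List ℕ) (i : ℕ) : Bool :=
  decide (i < L.length ∧ ∀ j < i, L.getD j 0 < L.getD i 0)

/-- Number of records (left-to-right maxima) of the word `L`. -/
def recordCount (L : List ℕ) : ℕ :=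
  ((List.range L.length).filter (recB L)).length

/-- Number of fixed points (1-cycles) of `w`. -/
def fixCount {n : ℕ} (w : Equiv.Perm (Fin n)) : ℕ :=
  (Finset.univ.filter fun i : Fin n => w i = i).card

/-- `IsPhi w w'` says that `w' = φ(w)` where `φ = F ∘ I ∘ F⁻¹ ∘ R`:
first reverse the one-line notation of `w`, then apply `F⁻¹` (giving the
unique `u` whose Foata word is that reversal), invert `u`, and apply `F`. -/
def IsPhi {n : ℕ} (w w' : Equiv.Perm (Fin n)) : Prop :=
  ∃ u : Equiv.Perm (Fin n),
    foataWord u = (oneLineF w).reverse ∧ oneLineF w' = foataWord u⁻¹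

/-- `IsPhiBar w w'` says that `w' = φ̄(w)` where `φ̄ = I ∘ F⁻¹ ∘ R ∘ F`:
apply `F` to `w`, reverse the resulting word, apply `F⁻¹`, and invert. -/
def IsPhiBar {n : ℕ} (w w' : Equiv.Perm (Fin n)) : Prop :=
  foataWord w'⁻¹ = (foataWord w).reverse

/-- `IsGamma w w'` says that `w' = γ(w)` where `γ = I ∘ F⁻¹ ∘ C ∘ F`:
apply `F` to `w`, complement each entry of the resulting word, apply `F⁻¹`,
and invert. -/
def IsGamma {n : ℕ} (w w' : Equiv.Perm (Fin n)) : Prop :=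
  foataWord w'⁻¹ = (foataWord w).map Fin.rev

namespace FoataAux
open Function List

variable {n : ℕ}

abbrev step (w : Equiv.Perm (Fin n)) (x : Fin n) : List (Fin n) → ℕ → List (Fin n) :=
  fun acc k => if (w ^ k) x ∈ acc then acc else acc ++ [(w ^ k) x]

lemma cyc_def (w : Equiv.Perm (Fin n)) (x : Fin n) :
    cyc w x = (List.range n).foldl (step w x) [] := rfl

lemma foldl_stable (w : Equiv.Perm (Fin n)) (x : Fin n) (l : List ℕ) (acc : List (Fin n))
    (h : ∀ k ∈ l, (w ^ k) x ∈ acc) : l.foldl (step w x) acc = acc := by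
  induction l with
  | nil => rfl
  | cons a t ih =>
    have ha : (w ^ a) x ∈ acc := h a (by simp)
    simp only [foldl_cons, step, if_pos ha]
    exact ih (fun k hk => h k (by simp [hk]))

lemma mp_pos (w : Equiv.Perm (Fin n)) (x : Fin n) : 0 < Function.minimalPeriod (⇑w) x := by
  have h : Function.IsPeriodicPt (⇑w) (orderOf w) x := by
    unfold Function.IsPeriodicPt Function.IsFixedPt
    rw [Equiv.Perm.iterate_eq_pow, pow_orderOf_eq_one]
    rfl
  exact h.minimalPeriod_pos (orderOf_pos w)

lemma mp_le (w : Equiv.Perm (Fin n)) (x : Fin n) : Function.minimalPeriod (⇑w) x ≤ n := by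
  classical
  have : (Finset.range (Function.minimalPeriod (⇑w) x)).card ≤ (Finset.univ : Finset (Fin n)).card := by
    apply Finset.card_le_card_of_injOn (fun k => (⇑w)^[k] x) (fun _ _ => Finset.mem_univ _)
    intro a ha b hb hab
    exact Function.iterate_injOn_Iio_minimalPeriod (by simpa using ha) (by simpa using hb) hab
  simpa using this

lemma cyc_eq (w : Equiv.Perm (Fin n)) (x : Fin n) :
    cyc w x = (List.range (Function.minimalPeriod (⇑w) x)).map (fun k => (w ^ k) x) := by
  set m := Function.minimalPeriod (⇑w) x with hm
  have hpos := mp_pos w x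
  have hle := mp_le w x
  have key : ∀ t, t ≤ n →
      (List.range t).foldl (step w x) [] = (List.range (min t m)).map (fun k => (w ^ k) x) := by
    intro t
    induction t with
    | zero => simp
    | succ t ih =>
      intro ht
      have ih' := ih (Nat.le_of_succ_le ht)
      rw [List.range_succ, List.foldl_append, ih']
      by_cases hc : t < m
      · have h1 : min t m = t := by omega
        have h2 : min (t+1) m = t + 1 := by omega
        rw [h1, h2]
        have hnm : (w ^ t) x ∉ (List.range t).map (fun k => (w ^ k) x) := by
          simp only [List.mem_map, List.mem_range, not_exists, not_and]
          intro k hk hkt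
          have : k = t := by
            apply Function.iterate_injOn_Iio_minimalPeriod (by simpa using (by omega : k < m))
              (by simpa using hc)
            simpa [Equiv.Perm.iterate_eq_pow] using hkt
          omega
        simp only [List.foldl_cons, List.foldl_nil, step, if_neg hnm]
        rw [List.range_succ, List.map_append]
        simp
      · have h1 : min t m = m := by omega
        have h2 : min (t+1) m = m := by omega
        rw [h1] at ih' ⊢
        rw [h2]
        have hmem : (w ^ t) x ∈ (List.range m).map (fun k => (w ^ k) x) := by
          simp only [List.mem_map, List.mem_range]
          refine ⟨t % m, Nat.mod_lt _ hpos, ?_⟩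
          have h3 := @Function.iterate_mod_minimalPeriod_eq (Fin n) (⇑w) x t
          rw [← hm] at h3
          simpa [Equiv.Perm.iterate_eq_pow] using h3
        simp only [List.foldl_cons, List.foldl_nil, step, if_pos hmem]
  have h := key n le_rfl
  rw [cyc_def, h, min_eq_right hle]

lemma pow_mod_mp (w : Equiv.Perm (Fin n)) (x : Fin n) (k : ℕ) :
    (w ^ (k % Function.minimalPeriod (⇑w) x)) x = (w ^ k) x := by
  have h3 := @Function.iterate_mod_minimalPeriod_eq (Fin n) (⇑w) x k
  rwa [Equiv.Perm.iterate_eq_pow, Equiv.Perm.iterate_eq_pow] at h3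

lemma pow_mp (w : Equiv.Perm (Fin n)) (x : Fin n) :
    (w ^ (Function.minimalPeriod (⇑w) x)) x = x := by
  have h3 := @Function.iterate_minimalPeriod (Fin n) (⇑w) x
  rwa [Equiv.Perm.iterate_eq_pow] at h3

lemma pow_mul_mp (w : Equiv.Perm (Fin n)) (x : Fin n) (q : ℕ) :
    (w ^ (Function.minimalPeriod (⇑w) x * q)) x = x := by
  induction q with
  | zero => simp
  | succ q ih =>
    rw [Nat.mul_succ, pow_add, Equiv.Perm.mul_apply]
    rw [pow_mp w x, ih]

lemma mem_cyc (w : Equiv.Perm (Fin n)) (x z : Fin n) :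
    z ∈ cyc w x ↔ ∃ k, (w ^ k) x = z := by
  rw [cyc_eq]
  simp only [List.mem_map, List.mem_range]
  constructor
  · rintro ⟨k, _, hk⟩; exact ⟨k, hk⟩
  · rintro ⟨k, hk⟩
    exact ⟨k % Function.minimalPeriod (⇑w) x, Nat.mod_lt _ (mp_pos w x),
      by rw [pow_mod_mp]; exact hk⟩

lemma cyc_nodup (w : Equiv.Perm (Fin n)) (x : Fin n) : (cyc w x).Nodup := by
  rw [cyc_eq]
  apply List.Nodup.map_on ?_ List.nodup_range
  intro a ha b hb hab
  rw [List.mem_range] at ha hb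
  exact Function.iterate_injOn_Iio_minimalPeriod (by simpa using ha) (by simpa using hb)
    (by simpa [Equiv.Perm.iterate_eq_pow] using hab)

lemma cyc_length (w : Equiv.Perm (Fin n)) (x : Fin n) :
    (cyc w x).length = Function.minimalPeriod (⇑w) x := by
  rw [cyc_eq]; simp

lemma cyc_head (w : Equiv.Perm (Fin n)) (x : Fin n) : ∃ t, cyc w x = x :: t := by
  rw [cyc_eq]
  obtain ⟨p, hp⟩ : ∃ p, Function.minimalPeriod (⇑w) x = p + 1 :=
    ⟨_, (Nat.succ_pred_eq_of_pos (mp_pos w x)).symm⟩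
  rw [hp, List.range_eq_range', List.range'_succ]
  refine ⟨List.map (fun k => (w ^ k) x) (List.range' 1 p 1), ?_⟩
  simp

lemma self_mem_cyc (w : Equiv.Perm (Fin n)) (x : Fin n) : x ∈ cyc w x :=
  (mem_cyc w x x).2 ⟨0, by simp⟩

lemma cyc_symm (w : Equiv.Perm (Fin n)) {x z : Fin n} (h : z ∈ cyc w x) : x ∈ cyc w z := by
  rw [mem_cyc] at h ⊢
  obtain ⟨k, hk⟩ := h
  set m := Function.minimalPeriod (⇑w) x with hm
  refine ⟨m - k % m, ?_⟩
  rw [← hk, ← Equiv.Perm.mul_apply, ← pow_add]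
  have hd := Nat.div_add_mod k m
  have hlt : k % m < m := Nat.mod_lt _ (mp_pos w x)
  have he : m - k % m + k = m * (k / m + 1) := by
    have h5 : m * (k / m + 1) = m * (k / m) + m := by ring
    omega
  rw [he, hm]
  exact pow_mul_mp w x _

lemma cyc_trans (w : Equiv.Perm (Fin n)) {x z t : Fin n} (h1 : z ∈ cyc w x)
    (h2 : t ∈ cyc w z) : t ∈ cyc w x := by
  rw [mem_cyc] at h1 h2 ⊢
  obtain ⟨k, hk⟩ := h1
  obtain ⟨l, hl⟩ := h2
  exact ⟨l + k, by rw [pow_add, Equiv.Perm.mul_apply, hk, hl]⟩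

lemma cyc_next (w : Equiv.Perm (Fin n)) (x : Fin n) (i : ℕ) (h : i < (cyc w x).length) :
    w ((cyc w x).get ⟨i, h⟩) =
      (cyc w x).get ⟨(i + 1) % (cyc w x).length, Nat.mod_lt _ (lt_of_le_of_lt (Nat.zero_le _) h)⟩ := by
  have hg : ∀ j (hj : j < (cyc w x).length), (cyc w x).get ⟨j, hj⟩ = (w ^ j) x := by
    intro j hj
    have := cyc_eq w x
    rw [List.get_of_eq this]
    simp
  rw [hg, hg]
  rw [cyc_length]
  rw [pow_mod_mp, ← Equiv.Perm.mul_apply, ← pow_succ']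

lemma cyc_next' (w : Equiv.Perm (Fin n)) (y x : Fin n) (hx : x ∈ cyc w y) :
    w x = (cyc w y).getD (((cyc w y).idxOf x + 1) % (cyc w y).length) x := by
  have hi : (cyc w y).idxOf x < (cyc w y).length := List.idxOf_lt_length_iff.2 hx
  have hlen : 0 < (cyc w y).length := lt_of_le_of_lt (Nat.zero_le _) hi
  have hmod : ((cyc w y).idxOf x + 1) % (cyc w y).length < (cyc w y).length :=
    Nat.mod_lt _ hlen
  rw [List.getD_eq_getElem _ _ hmod]
  have h1 := cyc_next w y ((cyc w y).idxOf x) hi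
  simp only [List.get_eq_getElem] at h1
  rw [List.getElem_idxOf hi] at h1
  exact h1

lemma prefix_eq {y : Fin n} {t t' X X' : List (Fin n)} (h : t ++ X = t' ++ X')
    (hlen : t.length ≤ t'.length)
    (ht' : ∀ z ∈ t', z < y)
    (hX : X = [] ∨ ∃ z s, X = z :: s ∧ y < z) : t = t' := by
  have h1 : t = t'.take t.length := by
    have := congrArg (List.take t.length) h
    rwa [List.take_append_of_le_length le_rfl, List.take_append_of_le_length hlen,
      List.take_length] at this
  rcases hd : t'.drop t.length with _ | ⟨a, s2⟩
  · have h2 : t'.length ≤ t.length := by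
      have := congrArg List.length hd
      simp at this
      omega
    rw [h1, List.take_of_length_le h2]
  · exfalso
    have ha : a ∈ t' := List.mem_of_mem_drop (by rw [hd]; simp)
    have hay : a < y := ht' a ha
    have h3 : t ++ X = t ++ (t'.drop t.length ++ X') := by
      rw [h]
      conv_lhs => rw [← List.take_append_drop t.length t', ← h1]
      rw [List.append_assoc]
    have h4 : X = a :: (s2 ++ X') := by
      have := List.append_cancel_left h3
      rw [this, hd]; rfl
    rcases hX with h5 | ⟨z, s, h5, hz⟩
    · rw [h5] at h4; exact nomatch h4
    · rw [h5] at h4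
      have : z = a := (List.cons.injEq _ _ _ _ ▸ h4).1
      exact absurd (this ▸ hz) (not_lt.2 (le_of_lt hay))

lemma flatMap_head_fact {y : Fin n} (M2 : List (Fin n)) (f : Fin n → List (Fin n))
    (hp : (y :: M2).Pairwise (· < ·))
    (hs : ∀ z ∈ M2, ∃ t, f z = z :: t ∧ ∀ a ∈ t, a < z) :
    M2.flatMap f = [] ∨ ∃ z s, M2.flatMap f = z :: s ∧ y < z := by
  cases M2 with
  | nil => exact Or.inl rfl
  | cons z M3 =>
    obtain ⟨tz, hz, _⟩ := hs z (by simp)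
    right
    refine ⟨z, tz ++ M3.flatMap f, ?_, ?_⟩
    · rw [List.flatMap_cons, hz]; rfl
    · exact (List.pairwise_cons.1 hp).1 z (by simp)

lemma key_inj : ∀ (M : List (Fin n)) (M' : List (Fin n)) (f f' : Fin n → List (Fin n)),
    M.Pairwise (· < ·) → M'.Pairwise (· < ·) →
    (∀ y ∈ M, ∃ t, f y = y :: t ∧ ∀ z ∈ t, z < y) →
    (∀ y ∈ M', ∃ t, f' y = y :: t ∧ ∀ z ∈ t, z < y) →
    M.flatMap f = M'.flatMap f' → M = M' ∧ ∀ y ∈ M, f y = f' y := by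
  intro M
  induction M with
  | nil =>
    intro M' f f' _ _ _ hs' h
    cases M' with
    | nil => exact ⟨rfl, by simp⟩
    | cons y' M2' =>
      exfalso
      obtain ⟨t', ht', _⟩ := hs' y' (by simp)
      rw [List.flatMap_nil, List.flatMap_cons, ht'] at h
      exact nomatch h
  | cons y M2 ih =>
    intro M' f f' hp hp' hs hs' h
    cases M' with
    | nil =>
      exfalso
      obtain ⟨t, ht, _⟩ := hs y (by simp)
      rw [List.flatMap_nil, List.flatMap_cons, ht] at h
      exact nomatch h
    | cons y' M2' =>
      obtain ⟨t, hft, htlt⟩ := hs y (by simp)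
      obtain ⟨t', hft', htlt'⟩ := hs' y' (by simp)
      rw [List.flatMap_cons, List.flatMap_cons, hft, hft', List.cons_append,
        List.cons_append] at h
      obtain ⟨hyy, htail⟩ := List.cons.injEq _ _ _ _ ▸ h
      subst hyy
      have hXw := flatMap_head_fact M2 f hp (fun z hz => hs z (by simp [hz]))
      have hXv := flatMap_head_fact M2' f' hp' (fun z hz => hs' z (by simp [hz]))
      have hts : t = t' := by
        rcases le_total t.length t'.length with hl | hl
        · exact prefix_eq htail hl htlt' hXw
        · exact (prefix_eq htail.symm hl htlt hXv).symm
      subst hts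
      have htail2 : M2.flatMap f = M2'.flatMap f' := List.append_cancel_left htail
      obtain ⟨hM, hfe⟩ := ih M2' f f' (List.Pairwise.sublist (by simp) hp)
        (List.Pairwise.sublist (by simp) hp')
        (fun z hz => hs z (by simp [hz])) (fun z hz => hs' z (by simp [hz])) htail2
      refine ⟨by rw [hM], ?_⟩
      intro z hz
      rcases List.mem_cons.1 hz with rfl | hz2
      · rw [hft, hft']
      · exact hfe z hz2

lemma shape_lemma (w : Equiv.Perm (Fin n)) :
    ∀ y ∈ (List.finRange n).filter (fun x => decide (∀ z ∈ cyc w x, z ≤ x)),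
    ∃ t, cyc w y = y :: t ∧ ∀ z ∈ t, z < y := by
  intro y hy
  rw [List.mem_filter] at hy
  have hle : ∀ z ∈ cyc w y, z ≤ y := of_decide_eq_true hy.2
  obtain ⟨t, ht⟩ := cyc_head w y
  refine ⟨t, ht, ?_⟩
  intro z hz
  have h1 : z ≤ y := hle z (by rw [ht]; exact List.mem_cons_of_mem _ hz)
  have hnd := cyc_nodup w y
  rw [ht] at hnd
  have h2 : y ∉ t := (List.nodup_cons.1 hnd).1
  exact lt_of_le_of_ne h1 (fun he => h2 (he ▸ hz))

lemma completeness (w : Equiv.Perm (Fin n)) (x : Fin n) :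
    ∃ y ∈ (List.finRange n).filter (fun x => decide (∀ z ∈ cyc w x, z ≤ x)), x ∈ cyc w y := by
  rcases hmax : (cyc w x).maximum with _ | y
  · exfalso
    have := List.maximum_eq_bot.1 hmax
    have hx := self_mem_cyc w x
    rw [this] at hx
    exact List.not_mem_nil hx
  · have hy : y ∈ cyc w x := List.maximum_mem hmax
    refine ⟨y, ?_, cyc_symm w hy⟩
    rw [List.mem_filter]
    refine ⟨List.mem_finRange y, decide_eq_true ?_⟩
    intro z hz
    exact List.le_maximum_of_mem (cyc_trans w hy hz) hmax

lemma foata_inj {v w : Equiv.Perm (Fin n)} (h : foataWord v = foataWord w) : v = w := by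
  have hK := key_inj ((List.finRange n).filter (fun x => decide (∀ z ∈ cyc v x, z ≤ x)))
    ((List.finRange n).filter (fun x => decide (∀ z ∈ cyc w x, z ≤ x)))
    (cyc v) (cyc w)
    (List.Pairwise.filter _ (List.pairwise_lt_finRange n))
    (List.Pairwise.filter _ (List.pairwise_lt_finRange n))
    (shape_lemma v) (shape_lemma w) h
  apply Equiv.ext
  intro x
  obtain ⟨y, hyF, hxy⟩ := completeness w x
  have hy' : y ∈ (List.finRange n).filter (fun x => decide (∀ z ∈ cyc v x, z ≤ x)) := by
    rw [hK.1]; exact hyF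
  have hcyc : cyc v y = cyc w y := hK.2 y hy'
  have hxv : x ∈ cyc v y := by rw [hcyc]; exact hxy
  have e1 := cyc_next' v y x hxv
  have e2 := cyc_next' w y x hxy
  rw [hcyc] at e1
  rw [e1, e2]

/-! ### Cycles of involutions -/

lemma cyc_fix {w : Equiv.Perm (Fin n)} {x : Fin n} (h : w x = x) : cyc w x = [x] := by
  have hm : Function.minimalPeriod (⇑w) x = 1 :=
    Function.minimalPeriod_eq_one_iff_isFixedPt.2 h
  rw [cyc_eq, hm, show List.range 1 = [0] from rfl]
  simp

lemma cyc_two {w : Equiv.Perm (Fin n)} {x : Fin n} (h2 : w (w x) = x) (hne : w x ≠ x) :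
    cyc w x = [x, w x] := by
  have hp : Function.IsPeriodicPt (⇑w) 2 x := by
    show (⇑w)^[2] x = x
    rw [Function.iterate_succ_apply', Function.iterate_one]
    exact h2
  have hdvd := hp.minimalPeriod_dvd
  have hpos := mp_pos w x
  have hne1 : Function.minimalPeriod (⇑w) x ≠ 1 := by
    intro h1
    exact hne (Function.minimalPeriod_eq_one_iff_isFixedPt.1 h1)
  have hm : Function.minimalPeriod (⇑w) x = 2 := by
    have hle := Nat.le_of_dvd (by norm_num) hdvd
    interval_cases hmp : Function.minimalPeriod (⇑w) x <;> omega
  rw [cyc_eq, hm, show List.range 2 = [0, 1] from rfl]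
  simp [pow_succ]

/-! ### The explicit involution u -/

def uFun (n : ℕ) : Fin n → Fin n :=
  fun x => if h : x.val + 1 = n then x else ⟨n - 2 - x.val, by omega⟩

lemma uFun_invol (n : ℕ) : Function.Involutive (uFun n) := by
  intro x
  have hx := x.isLt
  unfold uFun
  by_cases h1 : x.val + 1 = n
  · simp [h1]
  · rw [dif_neg h1]
    have h2 : ¬ ((⟨n - 2 - x.val, by omega⟩ : Fin n).val + 1 = n) := by simp; omega
    rw [dif_neg h2]
    apply Fin.ext
    simp
    omega

def uPerm (n : ℕ) : Equiv.Perm (Fin n) := Function.Involutive.toPerm (uFun n) (uFun_invol n)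

lemma uPerm_apply (n : ℕ) (x : Fin n) : uPerm n x = uFun n x := rfl

lemma uPerm_inv (n : ℕ) : (uPerm n)⁻¹ = uPerm n := by
  apply Equiv.ext
  intro x
  rw [Equiv.Perm.inv_eq_iff_eq]
  exact (uFun_invol n x).symm

lemma uPerm_val (n : ℕ) (x : Fin n) :
    (uPerm n x).val = if x.val + 1 = n then x.val else n - 2 - x.val := by
  rw [uPerm_apply]
  unfold uFun
  split_ifs <;> rfl

/-! ### Nat-level descriptions of cyc for uPerm and revPerm -/

def Fu (n : ℕ) : ℕ → List ℕ :=
  fun k => if k + 1 = n then [k] else if 2 * k + 2 = n then [k] else [k, n - 2 - k]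

def Fr (n : ℕ) : ℕ → List ℕ :=
  fun k => if 2 * k + 1 = n then [k] else [k, n - 1 - k]

lemma cyc_u_val (n : ℕ) (x : Fin n) : (cyc (uPerm n) x).map Fin.val = Fu n x.val := by
  have hx := x.isLt
  unfold Fu
  by_cases h1 : x.val + 1 = n
  · have hfix : uPerm n x = x := by
      apply Fin.ext; rw [uPerm_val, if_pos h1]
    rw [cyc_fix hfix, if_pos h1]
    rfl
  · rw [if_neg h1]
    by_cases h2 : 2 * x.val + 2 = n
    · have hfix : uPerm n x = x := by
        apply Fin.ext; rw [uPerm_val, if_neg h1]; omega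
      rw [cyc_fix hfix, if_pos h2]
      rfl
    · rw [if_neg h2]
      have hval : (uPerm n x).val = n - 2 - x.val := by rw [uPerm_val, if_neg h1]
      have hne : uPerm n x ≠ x := by
        intro he
        rw [he] at hval
        omega
      rw [cyc_two ((uFun_invol n) x) hne]
      simp [hval]

lemma P_u (n : ℕ) (x : Fin n) :
    decide (∀ z ∈ cyc (uPerm n) x, z ≤ x) = decide (n ≤ 2 * x.val + 2) := by
  have hx := x.isLt
  rw [decide_eq_decide]
  by_cases h1 : x.val + 1 = n
  · have hfix : uPerm n x = x := by apply Fin.ext; rw [uPerm_val, if_pos h1]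
    rw [cyc_fix hfix]
    simp
    omega
  · by_cases h2 : 2 * x.val + 2 = n
    · have hfix : uPerm n x = x := by
        apply Fin.ext; rw [uPerm_val, if_neg h1]; omega
      rw [cyc_fix hfix]
      simp
      omega
    · have hval : (uPerm n x).val = n - 2 - x.val := by rw [uPerm_val, if_neg h1]
      have hne : uPerm n x ≠ x := by
        intro he; rw [he] at hval; omega
      rw [cyc_two ((uFun_invol n) x) hne]
      constructor
      · intro h
        have h3 := h (uPerm n x) (by simp)
        rw [Fin.le_def, hval] at h3
        omega
      · intro h z hz
        rw [List.mem_cons, List.mem_singleton] at hz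
        rcases hz with rfl | rfl
        · exact le_refl _
        · rw [Fin.le_def, hval]; omega

lemma rev_val (x : Fin n) : (Fin.revPerm x).val = n - 1 - x.val := by
  show (Fin.rev x).val = n - 1 - x.val
  rw [Fin.val_rev]
  omega

lemma cyc_rev_val (n : ℕ) (x : Fin n) :
    (cyc (Fin.revPerm : Equiv.Perm (Fin n)) x).map Fin.val = Fr n x.val := by
  have hx := x.isLt
  unfold Fr
  by_cases h1 : 2 * x.val + 1 = n
  · have hfix : Fin.revPerm x = x := by
      apply Fin.ext; rw [rev_val]; omega
    rw [cyc_fix hfix, if_pos h1]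
    rfl
  · have hne : Fin.revPerm x ≠ x := by
      intro he
      have := congrArg Fin.val he
      rw [rev_val] at this
      omega
    have hinv : Fin.revPerm (Fin.revPerm x) = x := Fin.rev_rev x
    rw [cyc_two hinv hne, if_neg h1]
    simp only [List.map_cons, List.map_nil]
    rw [rev_val]

lemma P_rev (n : ℕ) (x : Fin n) :
    decide (∀ z ∈ cyc (Fin.revPerm : Equiv.Perm (Fin n)) x, z ≤ x)
      = decide (n ≤ 2 * x.val + 1) := by
  have hx := x.isLt
  rw [decide_eq_decide]
  by_cases h1 : 2 * x.val + 1 = n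
  · have hfix : Fin.revPerm x = x := by apply Fin.ext; rw [rev_val]; omega
    rw [cyc_fix hfix]
    simp
    omega
  · have hne : Fin.revPerm x ≠ x := by
      intro he
      have := congrArg Fin.val he
      rw [rev_val] at this
      omega
    rw [cyc_two (Fin.rev_rev x) hne]
    constructor
    · intro h
      have h3 := h (Fin.revPerm x) (by simp)
      rw [Fin.le_def, rev_val] at h3
      omega
    · intro h z hz
      rw [List.mem_cons, List.mem_singleton] at hz
      rcases hz with rfl | rfl
      · exact le_refl _
      · rw [Fin.le_def, rev_val]; omega

/-! ### Converting foataWord to a nat-level computation -/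

lemma word_nat (w : Equiv.Perm (Fin n)) (F' : ℕ → List ℕ) (P' : ℕ → Bool)
    (hF : ∀ x : Fin n, (cyc w x).map Fin.val = F' x.val)
    (hP : ∀ x : Fin n, (decide (∀ z ∈ cyc w x, z ≤ x)) = P' x.val) :
    (foataWord w).map Fin.val = ((List.range n).filter P').flatMap F' := by
  show (((List.finRange n).filter (fun x => decide (∀ y ∈ cyc w x, y ≤ x))).flatMap
    (cyc w)).map Fin.val = _
  rw [List.map_flatMap]
  have h1 : (List.finRange n).filter (fun x => decide (∀ y ∈ cyc w x, y ≤ x))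
      = (List.finRange n).filter (P' ∘ Fin.val) := List.filter_congr (fun x _ => hP x)
  rw [h1, ← (List.ext_getElem (by simp) (by simp) : (List.finRange n).map Fin.val = List.range n), List.filter_map, List.flatMap_map]
  apply List.flatMap_congr
  intro x _
  exact hF x

/-! ### Nat-level list lemmas -/

lemma filter_range_ge (c N : ℕ) :
    (List.range N).filter (fun k => decide (c ≤ k)) = List.range' c (N - c) := by
  induction N with
  | zero => simp
  | succ N ih =>
    rw [List.range_succ, List.filter_append, ih]
    by_cases h : c ≤ N
    · rw [show N + 1 - c = (N - c) + 1 by omega, List.range'_concat]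
      simp [h]
    · rw [show N + 1 - c = 0 by omega, show N - c = 0 by omega]
      simp [h]

lemma range'_eq_map (s k : ℕ) : List.range' s k = (List.range k).map (s + ·) := by
  induction k with
  | zero => simp
  | succ k ih => rw [List.range'_concat, List.range_succ, List.map_append, ih]; simp

lemma pair_shift (b : ℕ → ℕ) : ∀ (k c : ℕ),
    (List.range' c k).flatMap (fun x => [x, b x]) ++ [c + k] =
      [c] ++ (List.range' c k).flatMap (fun x => [b x, x + 1]) := by
  intro k
  induction k with
  | zero => simp
  | succ k ih =>
    intro c
    rw [List.range'_succ]
    rw [List.flatMap_cons, List.flatMap_cons]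
    have := ih (c + 1)
    rw [show c + (k + 1) = (c + 1) + k by omega]
    rw [List.append_assoc, this]
    simp

lemma flatMap_range'_congr (s k : ℕ) (f g : ℕ → List ℕ)
    (h : ∀ i ∈ List.range' s k, f i = g i) :
    (List.range' s k).flatMap f = (List.range' s k).flatMap g :=
  List.flatMap_congr h

lemma shift_eq (s k : ℕ) (f g : ℕ → List ℕ)
    (h : ∀ i < k, f (s + i) = g (s + 1 + i)) :
    (List.range' s k).flatMap f = (List.range' (s + 1) k).flatMap g := by
  rw [range'_eq_map s k, range'_eq_map (s+1) k, List.flatMap_map, List.flatMap_map]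
  apply List.flatMap_congr
  intro i hi
  exact h i (List.mem_range.1 hi)

lemma range'_decomp (s k : ℕ) :
    List.range' s (k+2) = s :: (List.range' (s+1) k ++ [s+1+k]) := by
  rw [show k + 2 = (k+1) + 1 from rfl, List.range'_succ, List.range'_concat, one_mul]

lemma key_word (n : ℕ) (hn : 2 ≤ n) :
    foataWord (uPerm n) = (foataWord (Fin.revPerm : Equiv.Perm (Fin n))).map Fin.rev := by
  apply List.map_injective_iff.2 Fin.val_injective
  have hU : (foataWord (uPerm n)).map Fin.val
      = ((List.range n).filter (fun k => decide (n ≤ 2 * k + 2))).flatMap (Fu n) :=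
    word_nat (uPerm n) (Fu n) _ (cyc_u_val n) (P_u n)
  have hR : (foataWord (Fin.revPerm : Equiv.Perm (Fin n))).map Fin.val
      = ((List.range n).filter (fun k => decide (n ≤ 2 * k + 1))).flatMap (Fr n) :=
    word_nat _ (Fr n) _ (cyc_rev_val n) (P_rev n)
  have hmapR : ((foataWord (Fin.revPerm : Equiv.Perm (Fin n))).map Fin.rev).map Fin.val
      = ((foataWord (Fin.revPerm : Equiv.Perm (Fin n))).map Fin.val).map (fun k => n - 1 - k) := by
    rw [List.map_map, List.map_map]
    apply List.map_congr_left
    intro x _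
    show (Fin.rev x).val = n - 1 - x.val
    rw [Fin.val_rev]
    omega
  rw [hU, hmapR, hR]
  -- normalize the filters to range'
  have hf1 : (List.range n).filter (fun k => decide (n ≤ 2 * k + 2))
      = List.range' ((n-1)/2) (n - (n-1)/2) := by
    rw [List.filter_congr (fun k _ => ?_), filter_range_ge ((n-1)/2) n]
    rw [decide_eq_decide]
    omega
  have hf2 : (List.range n).filter (fun k => decide (n ≤ 2 * k + 1))
      = List.range' (n/2) (n - n/2) := by
    rw [List.filter_congr (fun k _ => ?_), filter_range_ge (n/2) n]
    rw [decide_eq_decide]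
    omega
  rw [hf1, hf2, List.map_flatMap]
  rcases Nat.even_or_odd n with ⟨m, hm⟩ | ⟨m, hm⟩
  · -- n = 2m, write m = p+1
    subst hm
    obtain ⟨p, rfl⟩ : ∃ p, m = p + 1 := ⟨m - 1, by omega⟩
    rw [show p+1+(p+1) = 2*p+2 from by omega]
    rw [show (2*p+2-1)/2 = p from by omega, show 2*p+2 - p = p+2 from by omega,
      show (2*p+2)/2 = p+1 from by omega, show 2*p+2 - (p+1) = p+1 from by omega]
    rw [range'_decomp p p, List.range'_succ]
    simp only [List.flatMap_cons, List.flatMap_append, List.flatMap_nil, List.append_nil]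
    rw [show Fu (2*p+2) p = [p] from by
      unfold Fu; rw [if_neg (by omega), if_pos (by omega)]]
    rw [show Fu (2*p+2) (p+1+p) = [p+1+p] from by
      unfold Fu; rw [if_pos (by omega)]]
    rw [show (Fr (2*p+2) (p+1)).map (fun k => 2*p+2-1-k) = [p, p+1] from by
      unfold Fr
      rw [if_neg (by omega)]
      simp only [List.map_cons, List.map_nil, List.cons.injEq, and_true]
      constructor <;> omega]
    have hmid1 : (List.range' (p+1) p).flatMap (Fu (2*p+2))
        = (List.range' (p+1) p).flatMap (fun x => [x, 2*p+2-2-x]) := by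
      apply List.flatMap_congr
      intro k hk
      rw [List.mem_range'_1] at hk
      unfold Fu
      rw [if_neg (by omega), if_neg (by omega)]
    have hps := pair_shift (fun x => 2*p+2-2-x) p (p+1)
    rw [hmid1, hps]
    have hmid2 : (List.range' (p+1) p).flatMap (fun x => [2*p+2-2-x, x + 1])
        = (List.range' (p+1+1) p).flatMap
            (fun k => (Fr (2*p+2) k).map (fun j => 2*p+2-1-j)) := by
      apply shift_eq
      intro i hi
      unfold Fr
      rw [if_neg (by omega)]
      simp only [List.map_cons, List.map_nil, List.cons.injEq, and_true]
      constructor <;> omega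
    rw [hmid2]
    rfl
  · -- n = 2m+1
    subst hm
    have hm1 : 1 ≤ m := by omega
    rw [show (2*m+1-1)/2 = m from by omega, show (2*m+1)/2 = m from by omega,
      show 2*m+1 - m = m+1 from by omega]
    have dL : List.range' m (m+1) = List.range' m m ++ [m+m] := by
      rw [List.range'_concat, one_mul]
    nth_rewrite 1 [dL]
    rw [List.range'_succ]
    simp only [List.flatMap_cons, List.flatMap_append, List.flatMap_nil, List.append_nil]
    rw [show Fu (2*m+1) (m+m) = [m+m] from by
      unfold Fu; rw [if_pos (by omega)]]
    rw [show (Fr (2*m+1) m).map (fun k => 2*m+1-1-k) = [m] from by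
      unfold Fr
      rw [if_pos (by omega)]
      simp only [List.map_cons, List.map_nil, List.cons.injEq, and_true]
      omega]
    have hmid1 : (List.range' m m).flatMap (Fu (2*m+1))
        = (List.range' m m).flatMap (fun x => [x, 2*m+1-2-x]) := by
      apply List.flatMap_congr
      intro k hk
      rw [List.mem_range'_1] at hk
      unfold Fu
      rw [if_neg (by omega), if_neg (by omega)]
    have hps := pair_shift (fun x => 2*m+1-2-x) m m
    rw [hmid1, hps]
    have hmid2 : (List.range' m m).flatMap (fun x => [2*m+1-2-x, x + 1])
        = (List.range' (m+1) m).flatMap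
            (fun k => (Fr (2*m+1) k).map (fun j => 2*m+1-1-j)) := by
      apply shift_eq
      intro i hi
      unfold Fr
      rw [if_neg (by omega)]
      simp only [List.map_cons, List.map_nil, List.cons.injEq, and_true]
      constructor <;> omega
    rw [hmid2]

lemma revPerm_inv : (Fin.revPerm : Equiv.Perm (Fin n))⁻¹ = Fin.revPerm := by
  apply Equiv.ext
  intro x
  rw [Equiv.Perm.inv_eq_iff_eq]
  exact (Fin.rev_rev x).symm

lemma uPerm_ne_revPerm (n : ℕ) (hn : 2 ≤ n) : uPerm n ≠ Fin.revPerm := by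
  intro h
  have h0 : (uPerm n ⟨0, by omega⟩).val = (Fin.revPerm (⟨0, by omega⟩ : Fin n)).val := by rw [h]
  rw [uPerm_val, rev_val] at h0
  simp only at h0
  rw [if_neg (by simp; omega)] at h0
  simp at h0
  omega

end FoataAux

theorem gamma_revId_orbit' (n : ℕ) (hn : 2 ≤ n)
    (γ : Equiv.Perm (Fin n) → Equiv.Perm (Fin n))
    (hγ : ∀ w, (foataWord (γ w)⁻¹ = (foataWord w).map Fin.rev)) :
    Function.minimalPeriod γ (Fin.revPerm : Equiv.Perm (Fin n)) = 2 := by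
  open FoataAux in
  have h1 : γ Fin.revPerm = uPerm n := by
    have hg := hγ Fin.revPerm
    rw [← key_word n hn] at hg
    have h := foata_inj hg
    calc γ Fin.revPerm = ((γ Fin.revPerm)⁻¹)⁻¹ := (inv_inv _).symm
      _ = (uPerm n)⁻¹ := by rw [h]
      _ = uPerm n := uPerm_inv n
  have h2 : γ (uPerm n) = Fin.revPerm := by
    have hg := hγ (uPerm n)
    rw [key_word n hn, List.map_map] at hg
    have hid : (foataWord (Fin.revPerm : Equiv.Perm (Fin n))).map (Fin.rev ∘ Fin.rev)
        = foataWord (Fin.revPerm : Equiv.Perm (Fin n)) := by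
      rw [show (Fin.rev ∘ Fin.rev : Fin n → Fin n) = id from funext (fun x => Fin.rev_rev x)]
      exact List.map_id _
    rw [hid] at hg
    rw [← revPerm_inv] at hg
    have h := foata_inj hg
    exact inv_injective h
  have hper : Function.IsPeriodicPt γ 2 (Fin.revPerm : Equiv.Perm (Fin n)) := by
    show γ^[2] Fin.revPerm = Fin.revPerm
    show γ (γ Fin.revPerm) = Fin.revPerm
    rw [h1, h2]
  have hdvd := hper.minimalPeriod_dvd
  have hne1 : Function.minimalPeriod γ (Fin.revPerm : Equiv.Perm (Fin n)) ≠ 1 := by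
    intro h
    have hit := Function.iterate_minimalPeriod (f := γ) (x := (Fin.revPerm : Equiv.Perm (Fin n)))
    rw [h, Function.iterate_one, h1] at hit
    exact uPerm_ne_revPerm n hn hit
  have hpos : 0 < Function.minimalPeriod γ (Fin.revPerm : Equiv.Perm (Fin n)) :=
    hper.minimalPeriod_pos (by norm_num)
  rcases (Nat.dvd_prime Nat.prime_two).1 hdvd with h | h
  · exact absurd h hne1
  · exact h

/-- For `n ≥ 2`, the decreasing permutation
`n (n−1) ⋯ 2 1` (the reversal of the identity, i.e. `Fin.revPerm`) lies in a
`γ`-orbit of size exactly `2`, where `γ = I ∘ F⁻¹ ∘ C ∘ F`. -/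
theorem gamma_revId_orbit (n : ℕ) (hn : 2 ≤ n)
    (γ : Equiv.Perm (Fin n) → Equiv.Perm (Fin n))
    (hγ : ∀ w, IsGamma w (γ w)) :
    Function.minimalPeriod γ (Fin.revPerm : Equiv.Perm (Fin n)) = 2 :=
  gamma_revId_orbit' n hn γ hγ
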